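/- Recursion for the partial derivatives of the Version 1 cost: for all x ∈ ℝ^{N+1} and all n ∈ {0,…,N−1}, the partial derivatives of C⁽¹⁾ satisfy ∂C⁽¹⁾/∂xₙ (x) = F⁻¹(Eₙ⁺) + ā(Eₙ⁺)·(1 − τρ̄′(Eₙ⁺)Eₙ⁺)·[∂C⁽¹⁾/∂x_{n+1}(x) − F⁻¹(E_{n+1})], where Eₙ⁺ and E_{n+1} are evaluated along the dynamics determined by x. -/

import Mathlib

open Real Filter Finset

/-- `Fi f x = F(x) = ∫₀ˣ f(y) dy`. -/
noncomputable def Fi (f : ℝ → ℝ) (x : ℝ) : ℝ := ∫ y in (0:ℝ)..x, f y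

/-- `Ft f x = F̃(x) = ∫₀ˣ y f(y) dy`. -/
noncomputable def Ft (f : ℝ → ℝ) (x : ℝ) : ℝ := ∫ y in (0:ℝ)..x, y * f y

/-- `Gf f Finv = G = F̃ ∘ F⁻¹`. -/
noncomputable def Gf (f Finv : ℝ → ℝ) (x : ℝ) : ℝ := Ft f (Finv x)

/-- `ab τ ρ x = ā(x) = exp(−τ ρ̄(x))`. -/
noncomputable def ab (τ : ℝ) (ρ : ℝ → ℝ) (x : ℝ) : ℝ := Real.exp (-(τ * ρ x))

/-- Version 1 dynamics: `E₀ = 0`, `E_{n+1} = ā(Eₙ + xₙ)·(Eₙ + xₙ)`. -/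
noncomputable def Ev (τ : ℝ) (ρ : ℝ → ℝ) (x : ℕ → ℝ) : ℕ → ℝ
  | 0 => 0
  | n + 1 => ab τ ρ (Ev τ ρ x n + x n) * (Ev τ ρ x n + x n)

/-- Version 1 cost functional `C⁽¹⁾`. -/
noncomputable def C1 (f Finv : ℝ → ℝ) (τ : ℝ) (ρ : ℝ → ℝ) (N : ℕ) (x : ℕ → ℝ) : ℝ :=
  ∑ n ∈ Finset.range (N + 1), (Gf f Finv (Ev τ ρ x n + x n) - Gf f Finv (Ev τ ρ x n))

lemma abmul_hasDerivAt (τ : ℝ) (ρ : ℝ → ℝ) (hρ : ContDiff ℝ 2 ρ) (s : ℝ) :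
    HasDerivAt (fun s => ab τ ρ s * s) (ab τ ρ s * (1 - τ * deriv ρ s * s)) s := by
  have hρd : HasDerivAt ρ (deriv ρ s) s :=
    ((hρ.differentiable (by norm_num)) s).hasDerivAt
  have h1 : HasDerivAt (fun s => -(τ * ρ s)) (-(τ * deriv ρ s)) s := (hρd.const_mul τ).neg
  have h2 : HasDerivAt (fun s => ab τ ρ s) (ab τ ρ s * -(τ * deriv ρ s)) s := by
    have := h1.exp
    simpa [ab, mul_comm] using this
  have h3 := h2.mul (hasDerivAt_id s)
  simp only [id_eq, mul_one] at h3
  refine h3.congr_deriv ?_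
  ring

lemma gf_hasDerivAt (f Finv : ℝ → ℝ) (hf : Continuous f) (hfpos : ∀ x, 0 < f x)
    (hFinv₁ : ∀ x, Fi f (Finv x) = x) (hFinv₂ : ∀ x, Finv (Fi f x) = x) (s : ℝ) :
    HasDerivAt (Gf f Finv) (Finv s) s := by
  have hFi : ∀ y, HasDerivAt (Fi f) (f y) y := fun y =>
    (hf.integral_hasStrictDerivAt 0 y).hasDerivAt
  have hFimono : StrictMono (Fi f) := strictMono_of_deriv_pos (fun y => by
    rw [(hFi y).deriv]; exact hfpos y)
  have hmono : Monotone Finv := by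
    intro a b hab
    by_contra h
    push_neg at h
    have h2 := hFimono h
    rw [hFinv₁, hFinv₁] at h2
    exact absurd hab (not_le.mpr h2)
  have hsurj : Function.Surjective Finv := fun y => ⟨Fi f y, hFinv₂ y⟩
  have hcont : Continuous Finv := hmono.continuous_of_surjective hsurj
  have hne : f (Finv s) ≠ 0 := (hfpos _).ne'
  have hFinvd : HasDerivAt Finv (f (Finv s))⁻¹ s :=
    HasDerivAt.of_local_left_inverse hcont.continuousAt (hFi (Finv s)) hne
      (Filter.Eventually.of_forall hFinv₁)
  have hFt : HasDerivAt (Ft f) (Finv s * f (Finv s)) (Finv s) := by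
    have hc : Continuous (fun y : ℝ => y * f y) := continuous_id.mul hf
    exact (hc.integral_hasStrictDerivAt 0 (Finv s)).hasDerivAt
  have hcomp := hFt.comp s hFinvd
  have hval : Finv s * f (Finv s) * (f (Finv s))⁻¹ = Finv s := by
    field_simp
  rw [hval] at hcomp
  exact hcomp

lemma ev_update_hasDerivAt (τ : ℝ) (ρ : ℝ → ℝ) (hρ : ContDiff ℝ 2 ρ) (x : ℕ → ℝ) (n : ℕ) :
    ∀ j, HasDerivAt (fun t : ℝ => Ev τ ρ (Function.update x n t) j)
      (if j ≤ n then 0 else ∏ i ∈ Finset.Ico n j,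
        (ab τ ρ (Ev τ ρ x i + x i) *
          (1 - τ * deriv ρ (Ev τ ρ x i + x i) * (Ev τ ρ x i + x i)))) (x n) := by
  set m : ℕ → ℝ := fun i => ab τ ρ (Ev τ ρ x i + x i) *
      (1 - τ * deriv ρ (Ev τ ρ x i + x i) * (Ev τ ρ x i + x i)) with hm
  have hupd : ∀ j : ℕ, HasDerivAt (fun t : ℝ => Function.update x n t j)
      (if j = n then 1 else 0) (x n) := by
    intro j
    by_cases h : j = n
    · have heq : (fun t : ℝ => Function.update x n t j) = fun t : ℝ => t := by
        funext t; rw [h, Function.update_self]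
      rw [heq, if_pos h]
      exact hasDerivAt_id (x n)
    · simp only [Function.update_of_ne h, if_neg h]
      exact hasDerivAt_const (x n) (x j)
  intro j
  induction j with
  | zero =>
      simp only [Nat.zero_le, if_pos]
      simpa [Ev] using hasDerivAt_const (x n) (0 : ℝ)
  | succ j ih =>
      have hinner : HasDerivAt (fun t : ℝ => Ev τ ρ (Function.update x n t) j +
          Function.update x n t j)
          ((if j ≤ n then 0 else ∏ i ∈ Finset.Ico n j, m i) + if j = n then 1 else 0)
          (x n) := ih.add (hupd j)
      have hcomp := (abmul_hasDerivAt τ ρ hρ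
        (Ev τ ρ (Function.update x n (x n)) j + Function.update x n (x n) j)).comp (x n) hinner
      rw [Function.update_eq_self] at hcomp
      have hfun : ((fun s => ab τ ρ s * s) ∘ fun t => Ev τ ρ (Function.update x n t) j +
          Function.update x n t j) = fun t : ℝ => Ev τ ρ (Function.update x n t) (j + 1) := rfl
      rw [hfun] at hcomp
      refine hcomp.congr_deriv (Eq.symm ?_)
      rcases lt_trichotomy j n with h | h | h
      · have h1 : j ≤ n := le_of_lt h
        have h2 : j + 1 ≤ n := h
        simp [h1, h2, h.ne]
      · subst h
        simp [Nat.Ico_succ_singleton, hm]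
      · have h1 : ¬ (j ≤ n) := not_le.mpr h
        have h2 : ¬ (j + 1 ≤ n) := by omega
        have h3 : j ≠ n := h.ne'
        rw [if_neg h1, if_neg h2, if_neg h3, Finset.prod_Ico_succ_top (le_of_lt h)]
        ring

lemma c1_update_hasDerivAt (f Finv : ℝ → ℝ) (hf : Continuous f) (hfpos : ∀ x, 0 < f x)
    (hFinv₁ : ∀ x, Fi f (Finv x) = x) (hFinv₂ : ∀ x, Finv (Fi f x) = x)
    (τ : ℝ) (ρ : ℝ → ℝ) (hρ : ContDiff ℝ 2 ρ) (N : ℕ) (x : ℕ → ℝ) (n : ℕ) (hn : n ≤ N) :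
    HasDerivAt (fun t : ℝ => C1 f Finv τ ρ N (Function.update x n t))
      (Finv (Ev τ ρ x n + x n) +
        ∑ k ∈ Finset.Ioc n N, (Finv (Ev τ ρ x k + x k) - Finv (Ev τ ρ x k)) *
          ∏ j ∈ Finset.Ico n k, (ab τ ρ (Ev τ ρ x j + x j) *
            (1 - τ * deriv ρ (Ev τ ρ x j + x j) * (Ev τ ρ x j + x j)))) (x n) := by
  set m : ℕ → ℝ := fun i => ab τ ρ (Ev τ ρ x i + x i) *
      (1 - τ * deriv ρ (Ev τ ρ x i + x i) * (Ev τ ρ x i + x i)) with hm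
  set D : ℕ → ℝ := fun j => if j ≤ n then 0 else ∏ i ∈ Finset.Ico n j, m i with hD
  have hE : ∀ j, HasDerivAt (fun t : ℝ => Ev τ ρ (Function.update x n t) j) (D j) (x n) :=
    ev_update_hasDerivAt τ ρ hρ x n
  have hupd : ∀ j : ℕ, HasDerivAt (fun t : ℝ => Function.update x n t j)
      (if j = n then 1 else 0) (x n) := by
    intro j
    by_cases h : j = n
    · have heq : (fun t : ℝ => Function.update x n t j) = fun t : ℝ => t := by
        funext t; rw [h, Function.update_self]
      rw [heq, if_pos h]
      exact hasDerivAt_id (x n)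
    · simp only [Function.update_of_ne h, if_neg h]
      exact hasDerivAt_const (x n) (x j)
  have hterm : ∀ k, HasDerivAt (fun t : ℝ =>
      Gf f Finv (Ev τ ρ (Function.update x n t) k + Function.update x n t k) -
        Gf f Finv (Ev τ ρ (Function.update x n t) k))
      (Finv (Ev τ ρ x k + x k) * (D k + if k = n then 1 else 0) - Finv (Ev τ ρ x k) * D k)
      (x n) := by
    intro k
    have h1 := (gf_hasDerivAt f Finv hf hfpos hFinv₁ hFinv₂
      (Ev τ ρ (Function.update x n (x n)) k + Function.update x n (x n) k)).comp (x n)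
      ((hE k).add (hupd k))
    have h2 := (gf_hasDerivAt f Finv hf hfpos hFinv₁ hFinv₂
      (Ev τ ρ (Function.update x n (x n)) k)).comp (x n) (hE k)
    rw [Function.update_eq_self] at h1 h2
    exact h1.sub h2
  have hsum : HasDerivAt (fun t : ℝ => C1 f Finv τ ρ N (Function.update x n t))
      (∑ k ∈ Finset.range (N + 1),
        (Finv (Ev τ ρ x k + x k) * (D k + if k = n then 1 else 0) - Finv (Ev τ ρ x k) * D k))
      (x n) := by
    simp only [C1]
    exact HasDerivAt.fun_sum fun k _ => hterm k
  convert hsum using 1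
  have hsplit : ∀ k, Finv (Ev τ ρ x k + x k) * (D k + if k = n then 1 else 0) -
      Finv (Ev τ ρ x k) * D k
      = (Finv (Ev τ ρ x k + x k) - Finv (Ev τ ρ x k)) * D k +
        (if k = n then Finv (Ev τ ρ x k + x k) else 0) := by
    intro k
    by_cases h : k = n <;> simp [h] <;> ring
  rw [Finset.sum_congr rfl (fun k _ => hsplit k), Finset.sum_add_distrib,
    Finset.sum_ite_eq' (Finset.range (N + 1)) n (fun k => Finv (Ev τ ρ x k + x k)),
    if_pos (Finset.mem_range.mpr (by omega))]
  have h1 : ∑ k ∈ Finset.range (N + 1), (Finv (Ev τ ρ x k + x k) - Finv (Ev τ ρ x k)) * D k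
      = ∑ k ∈ Finset.Ioc n N, (Finv (Ev τ ρ x k + x k) - Finv (Ev τ ρ x k)) * D k := by
    refine (Finset.sum_subset ?_ ?_).symm
    · intro k hk
      simp only [Finset.mem_Ioc] at hk
      exact Finset.mem_range.mpr (by omega)
    · intro k hk hk'
      simp only [Finset.mem_Ioc, not_and, not_le] at hk'
      rcases le_or_gt k n with h | h
      · simp [hD, h]
      · exact absurd (hk' h) (not_lt.mpr (by simpa using Nat.lt_succ_iff.mp (Finset.mem_range.mp hk)))
  rw [h1]
  rw [add_comm]
  congr 1
  refine Finset.sum_congr rfl ?_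
  intro k hk
  simp only [Finset.mem_Ioc] at hk
  simp [hD, not_le.mpr hk.1]

/-- Recursion for the partial derivatives of the Version 1 cost:
`∂C⁽¹⁾/∂xₙ = F⁻¹(Eₙ⁺) + ā(Eₙ⁺)(1 − τρ̄′(Eₙ⁺)Eₙ⁺)[∂C⁽¹⁾/∂x_{n+1} − F⁻¹(E_{n+1})]`. -/
theorem C1_partial_deriv_recursion
    (f Finv : ℝ → ℝ) (hf : Continuous f) (hfpos : ∀ x, 0 < f x)
    (htop : Tendsto (Fi f) atTop atTop) (hbot : Tendsto (Fi f) atBot atBot)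
    (hFinv₁ : ∀ x, Fi f (Finv x) = x) (hFinv₂ : ∀ x, Finv (Fi f x) = x)
    (τ : ℝ) (hτ : 0 < τ) (ρ : ℝ → ℝ) (hρ : ContDiff ℝ 2 ρ)
    (N : ℕ) (hN : 1 ≤ N) :
    ∀ (x : ℕ → ℝ) (n : ℕ), n < N →
      deriv (fun t : ℝ => C1 f Finv τ ρ N (Function.update x n t)) (x n) =
        Finv (Ev τ ρ x n + x n) +
          ab τ ρ (Ev τ ρ x n + x n) *
            (1 - τ * deriv ρ (Ev τ ρ x n + x n) * (Ev τ ρ x n + x n)) *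
            (deriv (fun t : ℝ => C1 f Finv τ ρ N (Function.update x (n + 1) t)) (x (n + 1)) -
              Finv (Ev τ ρ x (n + 1))) := by
  intro x n hn
  have h1 := (c1_update_hasDerivAt f Finv hf hfpos hFinv₁ hFinv₂ τ ρ hρ N x n
    (le_of_lt hn)).deriv
  have h2 := (c1_update_hasDerivAt f Finv hf hfpos hFinv₁ hFinv₂ τ ρ hρ N x (n + 1) hn).deriv
  rw [h1, h2]
  set m : ℕ → ℝ := fun i => ab τ ρ (Ev τ ρ x i + x i) *
      (1 - τ * deriv ρ (Ev τ ρ x i + x i) * (Ev τ ρ x i + x i)) with hm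
  have hins : Finset.Ioc n N = insert (n + 1) (Finset.Ioc (n + 1) N) := by
    ext k
    simp only [Finset.mem_Ioc, Finset.mem_insert]
    omega
  rw [hins, Finset.sum_insert (by simp), Nat.Ico_succ_singleton, Finset.prod_singleton]
  have hprod : ∀ k ∈ Finset.Ioc (n + 1) N,
      (Finv (Ev τ ρ x k + x k) - Finv (Ev τ ρ x k)) * ∏ j ∈ Finset.Ico n k, m j =
      m n * ((Finv (Ev τ ρ x k + x k) - Finv (Ev τ ρ x k)) * ∏ j ∈ Finset.Ico (n + 1) k, m j) := by
    intro k hk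
    simp only [Finset.mem_Ioc] at hk
    rw [Finset.prod_eq_prod_Ico_succ_bot (by omega) m]
    ring
  rw [Finset.sum_congr rfl hprod, ← Finset.mul_sum]
  simp only [hm]
  ring
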